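/- Assume the hypotheses: 0 < F(x) ≤ c for all x > 0, limsup_{x→∞} F(x) < 1, liminf_{x→0⁺} F(x) > 1; there is a unique x̄ > 0 with F(x̄) = 1; 0 < α := inf_{x>0} F(x) < 1 < c := sup_{x>0} F(x) < ∞; and F(x) ≤ 1 if and only if x ≥ x̄. Then every positive solution (A_n)_{n≥−m} of A_{n+1} = A_n·F(A_{n−m}) that is eventually nonoscillatory about x̄ (i.e. A_n ≥ x̄ for all sufficiently large n, or A_n ≤ x̄ for all sufficiently large n) converges to x̄ as n → ∞. -/

import Mathlib

open Filter

private lemma toNat_tendsto : Tendsto Int.toNat atTop atTop := by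
  refine tendsto_atTop_atTop.mpr fun b => ⟨(b : ℤ), fun a ha => ?_⟩
  have h0 : (0 : ℤ) ≤ a := le_trans (Int.ofNat_nonneg b) ha
  exact (Int.le_toNat h0).mpr ha

/-- If a positive solution converges to a positive limit `L`, then `F L = 1`,
hence `L = xbar`. -/
private lemma limit_eq (m : ℕ) (F : ℝ → ℝ) (xbar L : ℝ)
    (hcont : ContinuousOn F (Set.Ioi (0 : ℝ)))
    (hL : 0 < L)
    (huniq : ∀ y : ℝ, 0 < y → F y = 1 → y = xbar)
    (A : ℤ → ℝ)
    (hApos : ∀ n : ℤ, -(m : ℤ) ≤ n → 0 < A n)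
    (hArec : ∀ n : ℤ, 0 ≤ n → A (n + 1) = A n * F (A (n - m)))
    (hconv : Tendsto A atTop (nhds L)) : L = xbar := by
  have hshift : Tendsto (fun n : ℤ => n - (m : ℤ)) atTop atTop := by
    simpa [sub_eq_add_neg] using tendsto_atTop_add_const_right atTop (-(m : ℤ)) tendsto_id
  have hAm : Tendsto (fun n : ℤ => A (n - m)) atTop (nhds L) := hconv.comp hshift
  have hcl : ContinuousAt F L := hcont.continuousAt (Ioi_mem_nhds hL)
  have hFL : Tendsto (fun n : ℤ => F (A (n - m))) atTop (nhds (F L)) :=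
    hcl.tendsto.comp hAm
  have hsucc : Tendsto (fun n : ℤ => A (n + 1)) atTop (nhds L) :=
    hconv.comp (tendsto_atTop_add_const_right atTop 1 tendsto_id)
  have hratio : Tendsto (fun n : ℤ => A (n + 1) / A n) atTop (nhds 1) := by
    have := hsucc.div hconv (ne_of_gt hL)
    rw [div_self (ne_of_gt hL)] at this
    exact this
  have heq : ∀ᶠ n : ℤ in atTop, A (n + 1) / A n = F (A (n - m)) := by
    filter_upwards [eventually_ge_atTop (0 : ℤ)] with n hn
    have hpos : 0 < A n := hApos n (le_trans (by simp) hn)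
    rw [hArec n hn, mul_div_cancel_left₀ _ (ne_of_gt hpos)]
  have hF1 : F L = 1 := tendsto_nhds_unique hFL (hratio.congr' heq)
  exact huniq L hL hF1

/-- Every eventually nonoscillatory (about `x̄`) positive solution of
`A_{n+1} = A_n F(A_{n-m})` converges to the equilibrium `x̄`. -/
theorem stmt_7 (m : ℕ) (F : ℝ → ℝ) (c α xbar : ℝ)
    (hFc : ∀ x : ℝ, 0 < x → 0 < F x ∧ F x ≤ c)
    (hcont : ContinuousOn F (Set.Ioi (0 : ℝ)))
    (hsup : Filter.limsup F Filter.atTop < 1)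
    (hinf : 1 < Filter.liminf F (nhdsWithin 0 (Set.Ioi (0 : ℝ))))
    (hxbar : 0 < xbar ∧ F xbar = 1 ∧ ∀ y : ℝ, 0 < y → F y = 1 → y = xbar)
    (hα : α = sInf (F '' Set.Ioi 0))
    (hc : c = sSup (F '' Set.Ioi 0))
    (hbounds : 0 < α ∧ α < 1 ∧ 1 < c)
    (hmono : ∀ x : ℝ, 0 < x → (F x ≤ 1 ↔ xbar ≤ x))
    (A : ℤ → ℝ)
    (hApos : ∀ n : ℤ, -(m : ℤ) ≤ n → 0 < A n)
    (hArec : ∀ n : ℤ, 0 ≤ n → A (n + 1) = A n * F (A (n - m)))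
    (hnonosc : (∀ᶠ n : ℤ in Filter.atTop, xbar ≤ A n) ∨
      (∀ᶠ n : ℤ in Filter.atTop, A n ≤ xbar)) :
    Filter.Tendsto A Filter.atTop (nhds xbar) := by
  obtain ⟨hxpos, hFx, huniq⟩ := hxbar
  have hnegm : ∀ n : ℤ, 0 ≤ n → -(m : ℤ) ≤ n := fun n hn => le_trans (by simp) hn
  rcases hnonosc with hge | hle
  · -- eventually xbar ≤ A n : solution eventually antitone
    obtain ⟨N0, hN0⟩ := eventually_atTop.mp hge
    set N : ℤ := max N0 0 with hN
    have hNnn : (0 : ℤ) ≤ N := le_max_right _ _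
    have hNge : ∀ n : ℤ, N ≤ n → xbar ≤ A n := fun n hn =>
      hN0 n (le_trans (le_max_left _ _) hn)
    set M : ℤ := N + m with hM
    have hMnn : (0 : ℤ) ≤ M := by positivity
    set B : ℕ → ℝ := fun k => A (M + k) with hB
    have hBanti : Antitone B := by
      refine antitone_nat_of_succ_le fun k => ?_
      have hnn : (0 : ℤ) ≤ M + k := by positivity
      have hBk : B (k + 1) = A (M + k) * F (A (M + k - m)) := by
        have : (M + ((k : ℤ) + 1)) = (M + k) + 1 := by ring
        simp only [hB]
        push_cast
        rw [this, hArec (M + k) hnn]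
      have harg : xbar ≤ A (M + k - m) := by
        refine hNge _ ?_
        simp only [hM]; omega
      have hargpos : 0 < A (M + k - m) := hApos _ (by omega)
      have hF1 : F (A (M + k - m)) ≤ 1 := (hmono _ hargpos).mpr harg
      have hApos' : 0 < A (M + k) := hApos _ (by omega)
      calc B (k + 1) = A (M + k) * F (A (M + k - m)) := hBk
        _ ≤ A (M + k) * 1 := by
            exact mul_le_mul_of_nonneg_left hF1 (le_of_lt hApos')
        _ = B k := by simp [hB]
    have hBlb : ∀ k : ℕ, xbar ≤ B k := fun k => hNge _ (by simp only [hM]; omega)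
    have hBdd : BddBelow (Set.range B) := ⟨xbar, by rintro y ⟨k, rfl⟩; exact hBlb k⟩
    set L : ℝ := ⨅ k, B k with hLdef
    have hBtend : Tendsto B atTop (nhds L) := tendsto_atTop_ciInf hBanti hBdd
    have hLge : xbar ≤ L := le_ciInf hBlb
    have hL : 0 < L := lt_of_lt_of_le hxpos hLge
    -- Transfer convergence from B to A
    have htn : Tendsto (fun n : ℤ => (n - M).toNat) atTop atTop :=
      toNat_tendsto.comp (by
        simpa [sub_eq_add_neg] using tendsto_atTop_add_const_right atTop (-M) tendsto_id)
    have hAconv : Tendsto A atTop (nhds L) := by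
      refine (hBtend.comp htn).congr' ?_
      filter_upwards [eventually_ge_atTop M] with n hn
      simp only [Function.comp, hB]
      rw [Int.toNat_of_nonneg (by omega)]
      ring_nf
    have : L = xbar := limit_eq m F xbar L hcont hL huniq A hApos hArec hAconv
    rwa [this] at hAconv
  · -- eventually A n ≤ xbar : solution eventually monotone
    obtain ⟨N0, hN0⟩ := eventually_atTop.mp hle
    set N : ℤ := max N0 0 with hN
    have hNnn : (0 : ℤ) ≤ N := le_max_right _ _
    have hNle : ∀ n : ℤ, N ≤ n → A n ≤ xbar := fun n hn =>
      hN0 n (le_trans (le_max_left _ _) hn)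
    set M : ℤ := N + m with hM
    have hMnn : (0 : ℤ) ≤ M := by positivity
    set B : ℕ → ℝ := fun k => A (M + k) with hB
    have hBmono : Monotone B := by
      refine monotone_nat_of_le_succ fun k => ?_
      have hnn : (0 : ℤ) ≤ M + k := by positivity
      have hBk : B (k + 1) = A (M + k) * F (A (M + k - m)) := by
        have : (M + ((k : ℤ) + 1)) = (M + k) + 1 := by ring
        simp only [hB]
        push_cast
        rw [this, hArec (M + k) hnn]
      have harg : A (M + k - m) ≤ xbar := hNle _ (by simp only [hM]; omega)
      have hargpos : 0 < A (M + k - m) := hApos _ (by omega)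
      have hF1 : 1 ≤ F (A (M + k - m)) := by
        rcases eq_or_lt_of_le harg with h | h
        · rw [h, hFx]
        · by_contra hcon
          push_neg at hcon
          exact absurd ((hmono _ hargpos).mp (le_of_lt hcon)) (not_le.mpr h)
      have hApos' : 0 < A (M + k) := hApos _ (by omega)
      calc B k = A (M + k) * 1 := by simp [hB]
        _ ≤ A (M + k) * F (A (M + k - m)) :=
            mul_le_mul_of_nonneg_left hF1 (le_of_lt hApos')
        _ = B (k + 1) := hBk.symm
    have hBub : ∀ k : ℕ, B k ≤ xbar := fun k => hNle _ (by simp only [hM]; omega)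
    have hBdd : BddAbove (Set.range B) := ⟨xbar, by rintro y ⟨k, rfl⟩; exact hBub k⟩
    set L : ℝ := ⨆ k, B k with hLdef
    have hBtend : Tendsto B atTop (nhds L) := tendsto_atTop_ciSup hBmono hBdd
    have hB0 : 0 < B 0 := hApos _ (by omega)
    have hL : 0 < L := lt_of_lt_of_le hB0 (le_ciSup hBdd 0)
    have htn : Tendsto (fun n : ℤ => (n - M).toNat) atTop atTop :=
      toNat_tendsto.comp (by
        simpa [sub_eq_add_neg] using tendsto_atTop_add_const_right atTop (-M) tendsto_id)
    have hAconv : Tendsto A atTop (nhds L) := by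
      refine (hBtend.comp htn).congr' ?_
      filter_upwards [eventually_ge_atTop M] with n hn
      simp only [Function.comp, hB]
      rw [Int.toNat_of_nonneg (by omega)]
      ring_nf
    have : L = xbar := limit_eq m F xbar L hcont hL huniq A hApos hArec hAconv
    rwa [this] at hAconv
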